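/- arXiv:1802.00246 — 7 statements merged into one kernel-verified Lean document; each statement's English description precedes it below -/
import Mathlib

section
/- The binary operation ⊕ on F³ defined by z₁ = x₁y₁ + c₃(x₂y₃ + x₃y₂) + c₁c₃x₃y₃, z₂ = x₁y₂ + x₂y₁ + c₂(x₂y₃ + x₃y₂) + (c₁c₂ + c₃)x₃y₃, z₃ = x₂y₂ + x₁y₃ + x₃y₁ + c₁(x₂y₃ + x₃y₂) + (c₁² + c₂)x₃y₃ is associative. -/
/-- The group law `⊕` on `F³` (encoded as `F × F × F`). -/
def oplus {F : Type*} [CommRing F] (c₁ c₂ c₃ : F) (x y : F × F × F) : F × F × F :=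
  ⟨x.1 * y.1 + c₃ * (x.2.1 * y.2.2 + x.2.2 * y.2.1) + c₁ * c₃ * (x.2.2 * y.2.2),
   x.1 * y.2.1 + x.2.1 * y.1 + c₂ * (x.2.1 * y.2.2 + x.2.2 * y.2.1)
     + (c₁ * c₂ + c₃) * (x.2.2 * y.2.2),
   x.2.1 * y.2.1 + x.1 * y.2.2 + x.2.2 * y.1 + c₁ * (x.2.1 * y.2.2 + x.2.2 * y.2.1)
     + (c₁ ^ 2 + c₂) * (x.2.2 * y.2.2)⟩

/-- The cubic form `Q`. -/
def Qf {F : Type*} [CommRing F] (c₁ c₂ c₃ : F) (x : F × F × F) : F :=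
  -c₂ * x.1 * x.2.1 ^ 2 + (c₂ ^ 2 - 2 * (c₁ * c₃)) * x.1 * x.2.2 ^ 2
    + c₁ * x.1 ^ 2 * x.2.1 + (c₁ ^ 2 + 2 * c₂) * x.1 ^ 2 * x.2.2
    - (c₂ * c₃) * x.2.1 * x.2.2 ^ 2 + (c₁ * c₃) * x.2.1 ^ 2 * x.2.2
    - (c₁ * c₂ + 3 * c₃) * x.1 * x.2.1 * x.2.2
    + x.1 ^ 3 + c₃ * x.2.1 ^ 3 + c₃ ^ 2 * x.2.2 ^ 3

/-- `n`-fold `⊕`-power. -/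
def opow {F : Type*} [CommRing F] (c₁ c₂ c₃ : F) : ℕ → F × F × F → F × F × F
  | 0, _ => (1, 0, 0)
  | n + 1, x => oplus c₁ c₂ c₃ x (opow c₁ c₂ c₃ n x)

theorem stmt4 {F : Type*} [CommRing F] (c₁ c₂ c₃ : F) :
    ∀ x y z : F × F × F,
      oplus c₁ c₂ c₃ (oplus c₁ c₂ c₃ x y) z = oplus c₁ c₂ c₃ x (oplus c₁ c₂ c₃ y z) := by
  intro x y z
  simp only [oplus, Prod.mk.injEq]
  refine ⟨by ring, by ring, by ring⟩
end

section
/- Define Q(x₁,x₂,x₃) = -c₂x₁x₂² + (c₂² - 2c₁c₃)x₁x₃² + c₁x₁²x₂ + (c₁² + 2c₂)x₁²x₃ - c₂c₃x₂x₃² + c₁c₃x₂²x₃ - (c₁c₂ + 3c₃)x₁x₂x₃ + x₁³ + c₃x₂³ + c₃²x₃³. Then for all x, y ∈ F³, Q(x ⊕ y) = Q(x)·Q(y), where ⊕ is the operation z₁ = x₁y₁ + c₃(x₂y₃ + x₃y₂) + c₁c₃x₃y₃, z₂ = x₁y₂ + x₂y₁ + c₂(x₂y₃ + x₃y₂) +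 (c₁c₂ + c₃)x₃y₃, z₃ = x₂y₂ + x₁y₃ + x₃y₁ + c₁(x₂y₃ + x₃y₂) + (c₁² + c₂)x₃y₃. -/
theorem stmt6 {F : Type*} [CommRing F] (c₁ c₂ c₃ : F) :
    ∀ x y : F × F × F,
      Qf c₁ c₂ c₃ (oplus c₁ c₂ c₃ x y) = Qf c₁ c₂ c₃ x * Qf c₁ c₂ c₃ y := by
  rintro ⟨a,b,c⟩ ⟨d,e,f⟩; simp only [oplus, Qf]; ring
end

section
/- For x ∈ F³ with Q(x) ≠ 0, the element y given by y₁ = (c₁x₁x₂ + (c₁² + 2c₂)x₁x₃ - (c₃ + c₁c₂)x₂x₃ + x₁² - c₂x₂² + (c₂² - c₁c₃)x₃²)/Q(x), y₂ = -(x₁x₂ + c₁²x₂x₃ + c₁x₂² - (c₁c₂ + c₃)x₃²)/Q(x), y₃ = (-x₁x₃ + c₁x₂x₃ + x₂² - c₂x₃²)/Q(x) satisfies x ⊕ y = (1,0,0). -/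
theorem stmt7 {F : Type*} [Field F] (c₁ c₂ c₃ : F) (x : F × F × F)
    (hx : Qf c₁ c₂ c₃ x ≠ 0) :
    oplus c₁ c₂ c₃ x
      ⟨(c₁ * x.1 * x.2.1 + (c₁ ^ 2 + 2 * c₂) * x.1 * x.2.2
          - (c₃ + c₁ * c₂) * x.2.1 * x.2.2 + x.1 ^ 2 - c₂ * x.2.1 ^ 2
          + (c₂ ^ 2 - c₁ * c₃) * x.2.2 ^ 2) / Qf c₁ c₂ c₃ x,
       -((x.1 * x.2.1 + c₁ ^ 2 * x.2.1 * x.2.2 + c₁ * x.2.1 ^ 2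
          - (c₁ * c₂ + c₃) * x.2.2 ^ 2) / Qf c₁ c₂ c₃ x),
       (-(x.1 * x.2.2) + c₁ * x.2.1 * x.2.2 + x.2.1 ^ 2 - c₂ * x.2.2 ^ 2)
          / Qf c₁ c₂ c₃ x⟩ = ((1 : F), (0 : F), (0 : F)) := by
  obtain ⟨a, b, c⟩ := x
  set q := Qf c₁ c₂ c₃ (a, b, c) with hq
  have hQ : q = -c₂ * a * b ^ 2 + (c₂ ^ 2 - 2 * (c₁ * c₃)) * a * c ^ 2
      + c₁ * a ^ 2 * b + (c₁ ^ 2 + 2 * c₂) * a ^ 2 * c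
      - (c₂ * c₃) * b * c ^ 2 + (c₁ * c₃) * b ^ 2 * c
      - (c₁ * c₂ + 3 * c₃) * a * b * c + a ^ 3 + c₃ * b ^ 3 + c₃ ^ 2 * c ^ 3 := rfl
  simp only [oplus]
  refine Prod.ext ?_ (Prod.ext ?_ ?_) <;> simp only <;> field_simp <;> (try rw [hQ]) <;> ring
end

section
/- The set {x ∈ F³ : Q(x) ≠ 0}, equipped with the operation ⊕, is an abelian group with identity (1,0,0). -/
theorem Qf_mul {F : Type*} [CommRing F] (c₁ c₂ c₃ : F) (x y : F × F × F) :
    Qf c₁ c₂ c₃ (oplus c₁ c₂ c₃ x y) = Qf c₁ c₂ c₃ x * Qf c₁ c₂ c₃ y := by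
  obtain ⟨x1, x2, x3⟩ := x; obtain ⟨y1, y2, y3⟩ := y
  simp only [Qf, oplus]
  ring

/-- `({x : F³ | Q x ≠ 0}, ⊕)` is an abelian group with identity `(1,0,0)`:
closure, associativity, commutativity, identity, and inverses. -/
theorem stmt8 {F : Type*} [Field F] (c₁ c₂ c₃ : F) :
    (∀ x y : F × F × F, Qf c₁ c₂ c₃ x ≠ 0 → Qf c₁ c₂ c₃ y ≠ 0 →
        Qf c₁ c₂ c₃ (oplus c₁ c₂ c₃ x y) ≠ 0) ∧
    (∀ x y z : F × F × F,
        oplus c₁ c₂ c₃ (oplus c₁ c₂ c₃ x y) z = oplus c₁ c₂ c₃ x (oplus c₁ c₂ c₃ y z)) ∧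
    (∀ x y : F × F × F, oplus c₁ c₂ c₃ x y = oplus c₁ c₂ c₃ y x) ∧
    Qf c₁ c₂ c₃ ((1 : F), (0 : F), (0 : F)) ≠ 0 ∧
    (∀ x : F × F × F, oplus c₁ c₂ c₃ ((1 : F), (0 : F), (0 : F)) x = x) ∧
    (∀ x : F × F × F, Qf c₁ c₂ c₃ x ≠ 0 →
        ∃ y : F × F × F, Qf c₁ c₂ c₃ y ≠ 0 ∧
          oplus c₁ c₂ c₃ x y = ((1 : F), (0 : F), (0 : F))) := by
  refine ⟨?_, ?_, ?_, ?_, ?_, ?_⟩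
  · intro x y hx hy
    rw [Qf_mul]; exact mul_ne_zero hx hy
  · intro ⟨x1,x2,x3⟩ ⟨y1,y2,y3⟩ ⟨z1,z2,z3⟩
    simp only [oplus, Prod.mk.injEq]
    refine ⟨by ring, by ring, by ring⟩
  · intro ⟨x1,x2,x3⟩ ⟨y1,y2,y3⟩
    simp only [oplus, Prod.mk.injEq]
    refine ⟨by ring, by ring, by ring⟩
  · simp [Qf]
  · intro ⟨x1,x2,x3⟩
    simp only [oplus, Prod.mk.injEq]
    refine ⟨by ring, by ring, by ring⟩
  · rintro ⟨x1,x2,x3⟩ hx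
    set Q := Qf c₁ c₂ c₃ (x1,x2,x3) with hQ
    set y : F × F × F :=
      (((x1+c₂*x3)*(x1+c₁*x2+(c₁^2+c₂)*x3)-(c₂*x2+(c₁*c₂+c₃)*x3)*(x2+c₁*x3))/Q,
        -(x2*(x1+c₁*x2+(c₁^2+c₂)*x3)-(c₂*x2+(c₁*c₂+c₃)*x3)*x3)/Q,
        (x2*(x2+c₁*x3)-(x1+c₂*x3)*x3)/Q) with hy
    have hQ' : Q = -c₂ * x1 * x2 ^ 2 + (c₂ ^ 2 - 2 * (c₁ * c₃)) * x1 * x3 ^ 2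
        + c₁ * x1 ^ 2 * x2 + (c₁ ^ 2 + 2 * c₂) * x1 ^ 2 * x3
        - (c₂ * c₃) * x2 * x3 ^ 2 + (c₁ * c₃) * x2 ^ 2 * x3
        - (c₁ * c₂ + 3 * c₃) * x1 * x2 * x3
        + x1 ^ 3 + c₃ * x2 ^ 3 + c₃ ^ 2 * x3 ^ 3 := rfl
    have hop : oplus c₁ c₂ c₃ (x1,x2,x3) y = ((1:F),(0:F),(0:F)) := by
      rw [hy]
      simp only [oplus, Prod.mk.injEq]
      refine ⟨?_, ?_, ?_⟩
      · field_simp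
        rw [hQ']; ring
      · field_simp
        ring
      · field_simp
        ring
    refine ⟨y, ?_, hop⟩
    intro h0
    have := Qf_mul c₁ c₂ c₃ (x1,x2,x3) y
    rw [hop, h0, mul_zero] at this
    have h1 : Qf c₁ c₂ c₃ ((1:F),(0:F),(0:F)) = 1 := by simp [Qf]
    rw [h1] at this
    exact one_ne_zero this
end

section
/- If χ(X) = X³ - c₁X² - c₂X - c₃ factors in F[X] as (X - h)(X² + kX + l) with h, k, l ∈ F, then Q(x) = [x₁² + (k² - 2l)x₁x₃ + l·x₂² - kl·x₂x₃ + l²·x₃² - k·x₁x₂]·[x₁ + h·x₂ + h²·x₃], i.e., the cubic form Q factors as a product of a quadratic form and a linear form. -/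
open Polynomial in
theorem stmt14 {F : Type*} [Field F] (c₁ c₂ c₃ h k l : F)
    (hfac : X ^ 3 - C c₁ * X ^ 2 - C c₂ * X - C c₃ =
      (X - C h) * (X ^ 2 + C k * X + C l)) :
    ∀ x₁ x₂ x₃ : F,
      Qf c₁ c₂ c₃ (x₁, x₂, x₃) =
        (x₁ ^ 2 + (k ^ 2 - 2 * l) * x₁ * x₃ + l * x₂ ^ 2 - k * l * x₂ * x₃
          + l ^ 2 * x₃ ^ 2 - k * x₁ * x₂) * (x₁ + h * x₂ + h ^ 2 * x₃) := by
  have hfac' : (X ^ 3 - C c₁ * X ^ 2 - C c₂ * X - C c₃ : F[X]) =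
      X ^ 3 - C (h - k) * X ^ 2 - C (h * k - l) * X - C (h * l) := by
    rw [hfac]; ring_nf; simp [map_sub, map_mul]; ring
  have e2 := congrArg (fun p => coeff p 2) hfac'
  have e1 := congrArg (fun p => coeff p 1) hfac'
  have e0 := congrArg (fun p => coeff p 0) hfac'
  simp only [coeff_sub, coeff_C_mul, coeff_X_pow, coeff_X, coeff_C, sub_mul,
    coeff_mul_X] at e2 e1 e0
  norm_num at e2 e1 e0
  have hc1 : c₁ = h - k := by linear_combination -e2
  have hc2 : c₂ = h * k - l := by linear_combination -e1
  have hc3 : c₃ = h * l := e0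
  intro x₁ x₂ x₃
  subst hc1 hc2 hc3
  simp only [Qf]
  ring
end

section
/- Let F_q be a finite field of characteristic different from 2 and 3, and let χ(X) = X³ - c₁X² - c₂X - c₃ be irreducible over F_q. Then the group G = (F_qP², ⊕) obtained as the quotient of (F_q³ \ {0}, ⊕) by the scalar action of F_q* is cyclic of order q² + q + 1. -/
lemma oplus_aux {K : Type*} [CommRing K] (d₁ d₂ d₃ t : K)
    (h3 : t ^ 3 = d₁ * t ^ 2 + d₂ * t + d₃) (x y : K × K × K) :
    (oplus d₁ d₂ d₃ x y).1 + (oplus d₁ d₂ d₃ x y).2.1 * t + (oplus d₁ d₂ d₃ x y).2.2 * t ^ 2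
      = (x.1 + x.2.1 * t + x.2.2 * t ^ 2) * (y.1 + y.2.1 * t + y.2.2 * t ^ 2) := by
  simp only [oplus]
  linear_combination (-(x.2.1 * y.2.2) - x.2.2 * y.2.1 - d₁ * (x.2.2 * y.2.2)
    - x.2.2 * y.2.2 * t) * h3

open Polynomial in
/-- For `F = 𝔽_q` of characteristic `≠ 2, 3` and `χ` irreducible, the projective group
`G = (𝔽_q P², ⊕)` (the quotient of `(𝔽_q³ \ {0}, ⊕)` by the scalar action of `𝔽_q*`)
is cyclic of order `q² + q + 1`: there is a generator `g` whose `⊕`-powers meet every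
projective class, and the number of classes is `q² + q + 1`. -/
theorem stmt15 {F : Type*} [Field F] [Fintype F]
    (hchar2 : ringChar F ≠ 2) (hchar3 : ringChar F ≠ 3) (c₁ c₂ c₃ : F)
    (hirr : Irreducible (X ^ 3 - C c₁ * X ^ 2 - C c₂ * X - C c₃)) :
    (∃ g : F × F × F, g ≠ 0 ∧ ∀ h : F × F × F, h ≠ 0 →
        ∃ (n : ℕ) (lam : F), lam ≠ 0 ∧ lam • opow c₁ c₂ c₃ n g = h) ∧
    Nat.card (Quot fun a b : {x : F × F × F // x ≠ 0} =>
        ∃ lam : F, lam ≠ 0 ∧ lam • a.val = b.val) =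
      Fintype.card F ^ 2 + Fintype.card F + 1 := by
  set p : F[X] := X ^ 3 - C c₁ * X ^ 2 - C c₂ * X - C c₃ with hp
  haveI : Fact (Irreducible p) := ⟨hirr⟩
  set K := AdjoinRoot p with hK
  set t : K := AdjoinRoot.root p with ht
  set a : F →+* K := algebraMap F K with ha
  have hdeg : p.natDegree = 3 := by rw [hp]; compute_degree!
  have hp0 : p ≠ 0 := fun h => by simp [h] at hdeg
  -- t^3 relation
  have haof : a = AdjoinRoot.of p := AdjoinRoot.algebraMap_eq p
  have h3 : t ^ 3 = a c₁ * t ^ 2 + a c₂ * t + a c₃ := by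
    have h0 : Polynomial.eval₂ (AdjoinRoot.of p) t
        (X ^ 3 - C c₁ * X ^ 2 - C c₂ * X - C c₃) = 0 := by
      rw [← hp]; exact AdjoinRoot.eval₂_root p
    simp only [eval₂_sub, eval₂_mul, eval₂_pow, eval₂_X, eval₂_C] at h0
    rw [haof]
    linear_combination h0
  -- the embedding e
  set e : F × F × F → K := fun x => a x.1 + a x.2.1 * t + a x.2.2 * t ^ 2 with he
  have emul : ∀ x y : F × F × F, e (oplus c₁ c₂ c₃ x y) = e x * e y := by
    intro x y
    have h1 := oplus_aux (a c₁) (a c₂) (a c₃) t h3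
      (a x.1, a x.2.1, a x.2.2) (a y.1, a y.2.1, a y.2.2)
    have h2 : (a (oplus c₁ c₂ c₃ x y).1, a (oplus c₁ c₂ c₃ x y).2.1,
        a (oplus c₁ c₂ c₃ x y).2.2)
        = oplus (a c₁) (a c₂) (a c₃) (a x.1, a x.2.1, a x.2.2) (a y.1, a y.2.1, a y.2.2) := by
      simp only [oplus, Prod.mk.injEq, map_add, map_mul, map_pow]
      try exact ⟨rfl, rfl, rfl⟩
    simp only [he]
    rw [← h2] at h1
    exact h1
  -- basis
  set pb := AdjoinRoot.powerBasis hp0 with hpb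
  have hdim : pb.dim = 3 := by rw [hpb, AdjoinRoot.powerBasis_dim]; exact hdeg
  set B := pb.basis.reindex (finCongr hdim) with hBdef
  have hB : ∀ i : Fin 3, B i = t ^ (i : ℕ) := by
    intro i
    simp [hBdef, hpb, Module.Basis.reindex_apply, PowerBasis.coe_basis, AdjoinRoot.powerBasis_gen]
    rfl
  have heq : ∀ x : F × F × F, e x = B.equivFun.symm ![x.1, x.2.1, x.2.2] := by
    intro x
    rw [Module.Basis.equivFun_symm_apply, Fin.sum_univ_three]
    simp only [hB, Matrix.cons_val_zero, Matrix.cons_val_one, Matrix.head_cons,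
      Matrix.cons_val_two, Matrix.tail_cons, Algebra.smul_def]
    rw [he]
    rw [show algebraMap F (AdjoinRoot p) = a from rfl, haof]
    norm_num
    try ring
  have einj : Function.Injective e := by
    intro x y hxy
    rw [heq, heq] at hxy
    have h := B.equivFun.symm.injective hxy
    have h0 := congrFun h 0
    have h1 := congrFun h 1
    have h2 := congrFun h 2
    simp only [Matrix.cons_val_zero, Matrix.cons_val_one, Matrix.head_cons,
      Matrix.cons_val_two, Matrix.tail_cons] at h0 h1 h2
    exact Prod.ext h0 (Prod.ext h1 h2)
  have esurj : ∀ z : K, ∃ x : F × F × F, e x = z := by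
    intro z
    refine ⟨(B.equivFun z 0, B.equivFun z 1, B.equivFun z 2), ?_⟩
    rw [heq]
    have : ![B.equivFun z 0, B.equivFun z 1, B.equivFun z 2] = B.equivFun z := by
      funext i; fin_cases i <;> rfl
    rw [this, B.equivFun.symm_apply_apply]
  have e0 : e 0 = 0 := by simp [he]
  have hne : ∀ x : F × F × F, x ≠ 0 → e x ≠ 0 := by
    intro x hx h
    exact hx (einj (h.trans e0.symm))
  have epow : ∀ (n : ℕ) (x : F × F × F), e (opow c₁ c₂ c₃ n x) = (e x) ^ n := by
    intro n x
    induction n with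
    | zero => simp [opow, he]
    | succ n ih => rw [opow, emul, ih, pow_succ]; ring
  have esmul : ∀ (lam : F) (v : F × F × F), e (lam • v) = a lam * e v := by
    intro lam v
    simp only [he, Prod.smul_def, smul_eq_mul, map_mul]
    ring
  -- finiteness
  haveI : Finite K := Finite.of_equiv _ B.equivFun.symm.toEquiv
  haveI : Fintype K := Fintype.ofFinite K
  -- Part 1: generator
  obtain ⟨g₀, hg₀⟩ := IsCyclic.exists_generator (α := Kˣ)
  obtain ⟨g, hg⟩ := esurj g₀.val
  have hgne : g ≠ 0 := by
    intro h; rw [h, e0] at hg; exact g₀.ne_zero hg.symm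
  constructor
  · refine ⟨g, hgne, fun h hh => ?_⟩
    set u : Kˣ := Units.mk0 (e h) (hne h hh) with hu
    obtain ⟨n, hn⟩ := mem_powers_iff_mem_zpowers.mpr (hg₀ u)
    refine ⟨n, 1, one_ne_zero, ?_⟩
    rw [one_smul]
    apply einj
    rw [epow, hg]
    have h2 := congrArg Units.val hn
    simp only [Units.val_pow_eq_pow_val, hu, Units.val_mk0] at h2
    exact h2
  -- Part 2: cardinality
  · set S : Subgroup Kˣ := (Units.map (a : F →* K)).range with hS
    set q : {x : F × F × F // x ≠ 0} → Kˣ ⧸ S :=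
      fun x => QuotientGroup.mk (Units.mk0 (e x.val) (hne _ x.prop)) with hq
    set r : {x : F × F × F // x ≠ 0} → {x : F × F × F // x ≠ 0} → Prop :=
      fun a b => ∃ lam : F, lam ≠ 0 ∧ lam • a.val = b.val with hr
    have resp : ∀ x y, r x y → q x = q y := by
      intro x y ⟨lam, hl0, hl⟩
      simp only [hq]
      rw [QuotientGroup.eq]
      refine MonoidHom.mem_range.mpr ⟨Units.mk0 lam hl0, ?_⟩
      apply Units.ext
      simp only [Units.val_mul, Units.coe_map, Units.val_inv_eq_inv_val, Units.val_mk0,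
        MonoidHom.coe_coe]
      rw [← hl, esmul]
      rw [mul_comm (a lam), ← mul_assoc, inv_mul_cancel₀ (hne _ x.prop), one_mul]
      try ring
    have hsurj : Function.Surjective (Quot.lift q resp) := by
      intro z
      obtain ⟨u, rfl⟩ := QuotientGroup.mk_surjective z
      obtain ⟨x, hx⟩ := esurj u.val
      have hx0 : x ≠ 0 := by
        intro h; rw [h, e0] at hx; exact u.ne_zero hx.symm
      refine ⟨Quot.mk r ⟨x, hx0⟩, ?_⟩
      simp only [Quot.lift_mk, hq]
      congr 1
      exact Units.ext (by simp [hx])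
    have hinj : Function.Injective (Quot.lift q resp) := by
      intro z w hxy
      obtain ⟨x, rfl⟩ := Quot.exists_rep z
      obtain ⟨y, rfl⟩ := Quot.exists_rep w
      simp only [Quot.lift_mk, hq] at hxy
      rw [QuotientGroup.eq, MonoidHom.mem_range] at hxy
      obtain ⟨w0, hw0⟩ := hxy
      apply Quot.sound
      refine ⟨w0.val, w0.ne_zero, ?_⟩
      apply einj
      have hv := congrArg Units.val hw0
      simp only [Units.val_mul, Units.coe_map, Units.val_inv_eq_inv_val, Units.val_mk0,
        MonoidHom.coe_coe] at hv
      rw [esmul, hv]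
      rw [mul_right_comm, inv_mul_cancel₀ (hne _ x.prop), one_mul]
      try ring
    have hcard1 : Nat.card (Quot r) = Nat.card (Kˣ ⧸ S) :=
      Nat.card_congr (Equiv.ofBijective _ ⟨hinj, hsurj⟩)
    have cardK : Fintype.card K = Fintype.card F ^ 3 := by
      rw [Module.card_fintype B, Fintype.card_fin]
    have cardKx : Nat.card Kˣ = Fintype.card F ^ 3 - 1 := by
      rw [Nat.card_units, Nat.card_eq_fintype_card, cardK]
    have cardS : Nat.card S = Fintype.card F - 1 := by
      have hinj2 : Function.Injective (Units.map (a : F →* K)) :=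
        Units.map_injective (a.injective)
      have : Nat.card S = Nat.card Fˣ := by
        rw [hS]
        exact (Nat.card_congr (Equiv.ofInjective _ hinj2)).symm
      rw [this, Nat.card_units, Nat.card_eq_fintype_card]
    have lag := Subgroup.card_eq_card_quotient_mul_card_subgroup S
    rw [cardKx, cardS] at lag
    have hq2 : 2 ≤ Fintype.card F := Fintype.one_lt_card
    obtain ⟨k, hk⟩ : ∃ k, Fintype.card F = k + 1 := ⟨Fintype.card F - 1, by omega⟩
    have hcube : (Fintype.card F) ^ 3 = k ^ 3 + 3 * k ^ 2 + 3 * k + 1 := by rw [hk]; ring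
    have hsq : Fintype.card F ^ 2 + Fintype.card F + 1 = k ^ 2 + 3 * k + 3 := by rw [hk]; ring
    rw [hcard1]
    rw [hcube, hk] at lag
    simp only [Nat.add_sub_cancel] at lag
    have hkey : (k ^ 2 + 3 * k + 3) * k = k ^ 3 + 3 * k ^ 2 + 3 * k := by ring
    rw [hsq]
    rcases Nat.eq_zero_or_pos k with hk0 | hkpos
    · omega
    · have : Nat.card (Kˣ ⧸ S) * k = (k ^ 2 + 3 * k + 3) * k := by omega
      exact Nat.eq_of_mul_eq_mul_right hkpos this
end

section
/- Let R be a commutative ring, c₁, c₂, c₃ ∈ R, and let Q be the associated cubic form. An element x ∈ R³ has an inverse under ⊕ (with identity (1,0,0)) if and only if Q(x) is a unit in R. Consequently, ({x ∈ R³ : Q(x) ∈ R*}, ⊕) is an abelian group. -/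
lemma Qmul {R : Type*} [CommRing R] (c₁ c₂ c₃ : R) (x y : R × R × R) :
    Qf c₁ c₂ c₃ (oplus c₁ c₂ c₃ x y) = Qf c₁ c₂ c₃ x * Qf c₁ c₂ c₃ y := by
  simp only [Qf, oplus]; ring

lemma oplus_comm' {R : Type*} [CommRing R] (c₁ c₂ c₃ : R) (x y : R × R × R) :
    oplus c₁ c₂ c₃ x y = oplus c₁ c₂ c₃ y x := by
  simp only [oplus, Prod.mk.injEq]; refine ⟨by ring, by ring, by ring⟩

lemma oplus_inv {R : Type*} [CommRing R] (c₁ c₂ c₃ : R) (x : R × R × R)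
    (h : IsUnit (Qf c₁ c₂ c₃ x)) :
    ∃ y : R × R × R, oplus c₁ c₂ c₃ x y = ((1 : R), (0 : R), (0 : R)) := by
  obtain ⟨u, hu⟩ := h
  set q : R := ((u⁻¹ : Rˣ) : R) with hqdef
  have hq : q * Qf c₁ c₂ c₃ x = 1 := by rw [hqdef, ← hu]; exact u.inv_mul
  refine ⟨⟨q * ((x.1 + c₂ * x.2.2) * (x.1 + c₁ * x.2.1 + (c₁ ^ 2 + c₂) * x.2.2)
      - (c₂ * x.2.1 + (c₁ * c₂ + c₃) * x.2.2) * (x.2.1 + c₁ * x.2.2)),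
    q * (-(x.2.1 * (x.1 + c₁ * x.2.1 + (c₁ ^ 2 + c₂) * x.2.2)
      - (c₂ * x.2.1 + (c₁ * c₂ + c₃) * x.2.2) * x.2.2)),
    q * (x.2.1 * (x.2.1 + c₁ * x.2.2) - (x.1 + c₂ * x.2.2) * x.2.2)⟩, ?_⟩
  simp only [oplus, Prod.mk.injEq]
  simp only [Qf] at hq
  refine ⟨by linear_combination hq, by ring, by ring⟩

/-- Over a commutative ring `R`, `x` is `⊕`-invertible iff `Q(x)` is a unit; consequently
`({x : R³ | Q(x) ∈ R*}, ⊕)` is an abelian group. -/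
theorem stmt19 {R : Type*} [CommRing R] (c₁ c₂ c₃ : R) :
    (∀ x : R × R × R,
      (∃ y : R × R × R, oplus c₁ c₂ c₃ x y = ((1 : R), (0 : R), (0 : R)) ∧
          oplus c₁ c₂ c₃ y x = ((1 : R), (0 : R), (0 : R))) ↔
        IsUnit (Qf c₁ c₂ c₃ x)) ∧
    (∀ x y : R × R × R, IsUnit (Qf c₁ c₂ c₃ x) → IsUnit (Qf c₁ c₂ c₃ y) →
        IsUnit (Qf c₁ c₂ c₃ (oplus c₁ c₂ c₃ x y))) ∧
    (∀ x y z : R × R × R,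
        oplus c₁ c₂ c₃ (oplus c₁ c₂ c₃ x y) z = oplus c₁ c₂ c₃ x (oplus c₁ c₂ c₃ y z)) ∧
    (∀ x y : R × R × R, oplus c₁ c₂ c₃ x y = oplus c₁ c₂ c₃ y x) ∧
    IsUnit (Qf c₁ c₂ c₃ ((1 : R), (0 : R), (0 : R))) ∧
    (∀ x : R × R × R, oplus c₁ c₂ c₃ ((1 : R), (0 : R), (0 : R)) x = x) ∧
    (∀ x : R × R × R, IsUnit (Qf c₁ c₂ c₃ x) →
        ∃ y : R × R × R, IsUnit (Qf c₁ c₂ c₃ y) ∧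
          oplus c₁ c₂ c₃ x y = ((1 : R), (0 : R), (0 : R))) := by
  have hone : Qf c₁ c₂ c₃ ((1 : R), (0 : R), (0 : R)) = 1 := by
    simp only [Qf]; ring
  have key : ∀ x : R × R × R,
      (∃ y : R × R × R, oplus c₁ c₂ c₃ x y = ((1 : R), (0 : R), (0 : R)) ∧
          oplus c₁ c₂ c₃ y x = ((1 : R), (0 : R), (0 : R))) ↔
        IsUnit (Qf c₁ c₂ c₃ x) := by
    intro x
    constructor
    · rintro ⟨y, h1, -⟩
      have h := Qmul c₁ c₂ c₃ x y
      rw [h1, hone] at h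
      exact IsUnit.of_mul_eq_one _ h.symm
    · intro h
      obtain ⟨y, hy⟩ := oplus_inv c₁ c₂ c₃ x h
      exact ⟨y, hy, (oplus_comm' c₁ c₂ c₃ y x).trans hy⟩
  refine ⟨key, ?_, ?_, oplus_comm' c₁ c₂ c₃, ?_, ?_, ?_⟩
  · intro x y hx hy
    rw [Qmul]; exact hx.mul hy
  · intro x y z
    simp only [oplus, Prod.mk.injEq]; refine ⟨by ring, by ring, by ring⟩
  · rw [hone]; exact isUnit_one
  · intro x
    obtain ⟨a, b, c⟩ := x
    simp only [oplus, Prod.mk.injEq]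
    refine ⟨by ring, by ring, by ring⟩
  · intro x hx
    obtain ⟨y, hy⟩ := oplus_inv c₁ c₂ c₃ x hx
    refine ⟨y, ?_, hy⟩
    have h := Qmul c₁ c₂ c₃ x y
    rw [hy, hone] at h
    exact IsUnit.of_mul_eq_one _ (by rw [mul_comm]; exact h.symm)
end
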